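/- Let $F_k(\theta) = e^{ik(\theta(y)-\theta(x))}$ for fixed distinct lattice sites $x, y$ and $k \ne 0$, viewed as a function of $\theta \in \mathbb{R}^n$ (coordinates indexed by lattice sites). Suppose $H \in C^2(\mathbb{R}^n)$ is uniformly convex with $e^{-H}$ integrable, and $\big|\frac{\partial^2 H}{\partial \theta(x)^2}\big| \le B$ pointwise. Then $|\langle F_k \rangle_H| \le \frac{2B}{k^2}$. -/

import Mathlib

open MeasureTheory Real Filter
set_option maxHeartbeats 1000000

lemma integral_deriv_zero {E : Type*} [NormedAddCommGroup E] [NormedSpace ℝ E]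
    [CompleteSpace E]
    (f f' : ℝ → E) (hd : ∀ t, HasDerivAt f (f' t) t) (hi : Integrable f')
    (htop : Tendsto f atTop (nhds 0)) (hbot : Tendsto f atBot (nhds 0)) :
    ∫ t, f' t = 0 := by
  rw [← intervalIntegral.integral_Iic_add_Ioi (b := 0) hi.integrableOn hi.integrableOn,
    MeasureTheory.integral_Ioi_of_hasDerivAt_of_tendsto' (fun t _ => hd t)
      hi.integrableOn htop,
    MeasureTheory.integral_Iic_of_hasDerivAt_of_tendsto' (fun t _ => hd t)
      hi.integrableOn hbot]
  abel

section Key1D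
variable {k δ B : ℝ} {h h' h'' : ℝ → ℝ}

lemma taylor_lower (hd1 : ∀ t, HasDerivAt h (h' t) t)
    (hd2 : ∀ t, HasDerivAt h' (h'' t) t)
    (hlow : ∀ t, δ ≤ h'' t) (t : ℝ) :
    h 0 + h' 0 * t + δ / 2 * t ^ 2 ≤ h t := by
  set g : ℝ → ℝ := fun s => h s - (h 0 + h' 0 * s + δ / 2 * s ^ 2) with hg
  have hgd : ∀ s, HasDerivAt g (h' s - (h' 0 + δ * s)) s := by
    intro s
    have : HasDerivAt (fun s : ℝ => h 0 + h' 0 * s + δ / 2 * s ^ 2)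
        (h' 0 + δ * s) s := by
      have h1 : HasDerivAt (fun s : ℝ => h 0 + h' 0 * s) (h' 0) s := by
        simpa using ((hasDerivAt_id s).const_mul (h' 0)).const_add (h 0)
      have h2 : HasDerivAt (fun s : ℝ => δ / 2 * s ^ 2) (δ / 2 * (2 * s)) s := by
        simpa using ((hasDerivAt_pow 2 s)).const_mul (δ / 2)
      have := h1.add h2
      rw [show h' 0 + δ * s = h' 0 + δ / 2 * (2 * s) by ring]
      exact this
    exact (hd1 s).sub this
  have hpmono : Monotone (fun s => h' s - (h' 0 + δ * s)) := by
    apply monotone_of_deriv_nonneg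
    · intro s
      exact ((hd2 s).sub (((hasDerivAt_id s).const_mul δ).const_add (h' 0))).differentiableAt
    · intro s
      have hds : HasDerivAt (fun s => h' s - (h' 0 + δ * s)) (h'' s - δ) s := by
        have : HasDerivAt (fun s : ℝ => h' 0 + δ * s) δ s := by
          simpa using ((hasDerivAt_id s).const_mul δ).const_add (h' 0)
        exact (hd2 s).sub this
      rw [hds.deriv]
      linarith [hlow s]
  have hp0 : h' 0 - (h' 0 + δ * 0) = 0 := by simp
  have hgd' : Differentiable ℝ g := fun s => (hgd s).differentiableAt
  have key : g 0 ≤ g t := by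
    rcases le_total 0 t with ht | ht
    · exact monotoneOn_of_deriv_nonneg (convex_Ici 0) hgd'.continuous.continuousOn
        (fun s _ => hgd'.differentiableAt.differentiableWithinAt)
        (fun s hs => by
          rw [(hgd s).deriv]
          have h0s : (0:ℝ) ≤ s := le_of_lt (by simpa using hs)
          simpa [hp0] using hpmono h0s)
        Set.self_mem_Ici (Set.mem_Ici.mpr ht) ht
    · exact antitoneOn_of_deriv_nonpos (convex_Iic 0) hgd'.continuous.continuousOn
        (fun s _ => hgd'.differentiableAt.differentiableWithinAt)
        (fun s hs => by
          rw [(hgd s).deriv]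
          have hs0 : s ≤ (0:ℝ) := le_of_lt (by simpa using hs)
          simpa [hp0] using hpmono hs0)
        (Set.mem_Iic.mpr ht) Set.self_mem_Iic ht
  have hg0 : g 0 = 0 := by simp [hg]
  rw [hg0] at key
  simpa [hg, sub_nonneg] using key

lemma exp_neg_int (hδ : 0 < δ) (hd1 : ∀ t, HasDerivAt h (h' t) t)
    (hd2 : ∀ t, HasDerivAt h' (h'' t) t) (hlow : ∀ t, δ ≤ h'' t) :
    Integrable (fun t => Real.exp (-(h t))) := by
  set a := |h' 0| with ha
  have hc : (0:ℝ) < δ/4 := by linarith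
  have hwle : ∀ t, Real.exp (-(h t)) ≤
      Real.exp (-(h 0) + a^2/δ) * Real.exp (-(δ/4) * t^2) := by
    intro t
    rw [← Real.exp_add]
    apply Real.exp_le_exp.mpr
    have ht := taylor_lower hd1 hd2 hlow t
    have h1 : -(h' 0 * t) ≤ a * |t| := by
      calc -(h' 0 * t) ≤ |(-(h' 0 * t))| := le_abs_self _
        _ = a * |t| := by rw [abs_neg, abs_mul]
    have h4 : (0:ℝ) < 4 * δ := by linarith
    have h2 : a * |t| ≤ δ/4 * t^2 + a^2/δ := by
      have hr : 4*δ*(δ/4*t^2 + a^2/δ) = δ^2*t^2 + 4*a^2 := by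
        field_simp
      have hl : 4*δ*(a*|t|) ≤ δ^2*t^2 + 4*a^2 := by
        nlinarith [sq_nonneg (δ * |t| - 2*a), sq_abs t]
      exact le_of_mul_le_mul_left (by rw [hr]; exact hl) h4
    linarith [ht, h1, h2]
  have hcont : Continuous h := by
    rw [continuous_iff_continuousAt]; exact fun t => (hd1 t).continuousAt
  refine Integrable.mono' (g := fun t => Real.exp (-(h 0) + a^2/δ) * Real.exp (-(δ/4) * t^2))
    ((integrable_exp_neg_mul_sq hc).const_mul _)
    ((Real.continuous_exp.comp hcont.neg).aestronglyMeasurable)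
    (ae_of_all _ fun t => ?_)
  rw [Real.norm_eq_abs, abs_of_pos (Real.exp_pos _)]
  exact hwle t

lemma key1D (hk : k ≠ 0) (hδ : 0 < δ) (hB : 0 ≤ B)
    (hd1 : ∀ t, HasDerivAt h (h' t) t) (hd2 : ∀ t, HasDerivAt h' (h'' t) t)
    (hc2 : Continuous h'')
    (hlow : ∀ t, δ ≤ h'' t) (hupp : ∀ t, |h'' t| ≤ B) :
    ‖∫ t : ℝ, Complex.exp (-(Complex.I * k * t)) * (Real.exp (-(h t)) : ℂ)‖
      ≤ 2 * B / k ^ 2 * ∫ t : ℝ, Real.exp (-(h t)) := by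
  set w : ℝ → ℝ := fun t => Real.exp (-(h t)) with hw
  set φ : ℝ → ℂ := fun t => Complex.exp (-(Complex.I * k * t)) with hφ
  set a := |h' 0| with ha
  set c : ℝ := δ/4 with hcdef
  have hc : (0:ℝ) < c := by rw [hcdef]; linarith
  set C₀ := Real.exp (-(h 0) + a^2/δ) with hC₀
  have hC₀pos : 0 < C₀ := Real.exp_pos _
  -- continuity
  have hcont_h : Continuous h := by
    rw [continuous_iff_continuousAt]; exact fun t => (hd1 t).continuousAt
  have hcont_h' : Continuous h' := by
    rw [continuous_iff_continuousAt]; exact fun t => (hd2 t).continuousAt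
  have hcont_w : Continuous w := Real.continuous_exp.comp hcont_h.neg
  have hcont_φ : Continuous φ :=
    Complex.continuous_exp.comp ((continuous_const.mul Complex.continuous_ofReal).neg)
  have hwpos : ∀ t, 0 < w t := fun t => Real.exp_pos _
  have hφ1 : ∀ t, ‖φ t‖ = 1 := by
    intro t
    rw [hφ]
    simp [Complex.norm_exp]
  -- pointwise bounds
  have hwle : ∀ t, w t ≤ C₀ * Real.exp (-c * t^2) := by
    intro t
    rw [hC₀, ← Real.exp_add]
    apply Real.exp_le_exp.mpr
    have ht := taylor_lower hd1 hd2 hlow t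
    have h1 : -(h' 0 * t) ≤ a * |t| := by
      calc -(h' 0 * t) ≤ |(-(h' 0 * t))| := le_abs_self _
        _ = a * |t| := by rw [abs_neg, abs_mul]
    have h4 : (0:ℝ) < 4 * δ := by linarith
    have h2 : a * |t| ≤ δ/4 * t^2 + a^2/δ := by
      have hr : 4*δ*(δ/4*t^2 + a^2/δ) = δ^2*t^2 + 4*a^2 := by
        field_simp
      have hl : 4*δ*(a*|t|) ≤ δ^2*t^2 + 4*a^2 := by
        nlinarith [sq_nonneg (δ * |t| - 2*a), sq_abs t]
      exact le_of_mul_le_mul_left (by rw [hr]; exact hl) h4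
    rw [hcdef]
    linarith [ht, h1, h2]
  have hh'bd : ∀ t, |h' t| ≤ a + B * |t| := by
    intro t
    have := Convex.norm_image_sub_le_of_norm_hasDerivWithin_le
      (f := h') (f' := h'') (s := Set.univ)
      (fun s _ => (hd2 s).hasDerivWithinAt) (fun s _ => by simpa using hupp s)
      convex_univ (Set.mem_univ 0) (Set.mem_univ t)
    have h2 : |h' t - h' 0| ≤ B * |t| := by simpa using this
    calc |h' t| = |h' 0 + (h' t - h' 0)| := by ring_nf
      _ ≤ |h' 0| + |h' t - h' 0| := abs_add_le _ _
      _ ≤ a + B * |t| := by rw [ha]; linarith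
  have hb1 : ∀ t, |h' t * w t| ≤ a * C₀ * Real.exp (-c*t^2)
      + B * C₀ * (|t| * Real.exp (-c*t^2)) := by
    intro t
    rw [abs_mul, abs_of_pos (hwpos t)]
    calc |h' t| * w t ≤ (a + B * |t|) * (C₀ * Real.exp (-c*t^2)) := by
          apply mul_le_mul (hh'bd t) (hwle t) (hwpos t).le
          have := abs_nonneg (h' 0)
          have := abs_nonneg t
          positivity
      _ = a * C₀ * Real.exp (-c*t^2) + B * C₀ * (|t| * Real.exp (-c*t^2)) := by ring
  -- integrability (real)
  have hgauss : Integrable (fun t : ℝ => Real.exp (-c*t^2)) := integrable_exp_neg_mul_sq hc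
  have hgauss1 : Integrable (fun t : ℝ => |t| * Real.exp (-c*t^2)) := by
    have := (integrable_mul_exp_neg_mul_sq hc).abs
    refine this.congr (ae_of_all _ fun t => ?_)
    simp [abs_mul, abs_of_pos (Real.exp_pos _)]
  have hgauss2 : Integrable (fun t : ℝ => t^2 * Real.exp (-c*t^2)) := by
    have hc2' : (0:ℝ) < c/2 := by linarith
    refine Integrable.mono' (g := fun t => (2/c) * Real.exp (-(c/2)*t^2))
      ((integrable_exp_neg_mul_sq hc2').const_mul _)
      (((continuous_pow 2).mul (Real.continuous_exp.comp (by continuity))).aestronglyMeasurable)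
      (ae_of_all _ fun t => ?_)
    rw [Real.norm_eq_abs, abs_mul, abs_of_pos (Real.exp_pos _),
      abs_of_nonneg (sq_nonneg t)]
    have h1 : c/2*t^2 ≤ Real.exp (c/2*t^2) := by
      linarith [Real.add_one_le_exp (c/2*t^2)]
    have h2 : t^2 ≤ 2/c * Real.exp (c/2*t^2) := by
      rw [div_mul_eq_mul_div, le_div_iff₀ hc]
      nlinarith [h1]
    calc t^2 * Real.exp (-c*t^2) ≤ (2/c * Real.exp (c/2*t^2)) * Real.exp (-c*t^2) :=
          mul_le_mul_of_nonneg_right h2 (Real.exp_pos _).le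
      _ = 2/c * Real.exp (-(c/2)*t^2) := by
          rw [mul_assoc, ← Real.exp_add]
          congr 2
          ring
  have int_w : Integrable w := exp_neg_int hδ hd1 hd2 hlow
  have int_h'w : Integrable (fun t => h' t * w t) := by
    refine Integrable.mono'
      (g := fun t => a * C₀ * Real.exp (-c*t^2) + B * C₀ * (|t| * Real.exp (-c*t^2)))
      ((hgauss.const_mul _).add (hgauss1.const_mul _))
      ((hcont_h'.mul hcont_w).aestronglyMeasurable)
      (ae_of_all _ fun t => ?_)
    rw [Real.norm_eq_abs]
    exact hb1 t
  have int_h'2w : Integrable (fun t => (h' t)^2 * w t) := by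
    refine Integrable.mono'
      (g := fun t => 2*a^2*C₀ * Real.exp (-c*t^2) + 2*B^2*C₀ * (t^2 * Real.exp (-c*t^2)))
      ((hgauss.const_mul _).add (hgauss2.const_mul _))
      (((hcont_h'.pow 2).mul hcont_w).aestronglyMeasurable)
      (ae_of_all _ fun t => ?_)
    rw [Real.norm_eq_abs, abs_mul, abs_of_pos (hwpos t), abs_pow, sq_abs]
    calc (h' t)^2 * w t ≤ (2*a^2 + 2*B^2*t^2) * (C₀ * Real.exp (-c*t^2)) := by
          apply mul_le_mul _ (hwle t) (hwpos t).le (by positivity)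
          have h1 : (h' t)^2 ≤ (a + B*|t|)^2 := by
            rw [← sq_abs (h' t)]
            apply pow_le_pow_left₀ (abs_nonneg _) (hh'bd t)
          nlinarith [sq_nonneg (a - B*|t|), sq_abs t]
      _ = 2*a^2*C₀ * Real.exp (-c*t^2) + 2*B^2*C₀ * (t^2 * Real.exp (-c*t^2)) := by ring
  have int_h''w : Integrable (fun t => h'' t * w t) := by
    refine Integrable.mono' (g := fun t => B * w t) (int_w.const_mul B)
      ((hc2.mul hcont_w).aestronglyMeasurable) (ae_of_all _ fun t => ?_)
    rw [Real.norm_eq_abs, abs_mul, abs_of_pos (hwpos t)]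
    exact mul_le_mul_of_nonneg_right (hupp t) (hwpos t).le
  -- complex integrability
  have hbdd : ∀ᵐ t, ‖φ t‖ ≤ (1:ℝ) := ae_of_all _ fun t => (hφ1 t).le
  have intc_w : Integrable (fun t => φ t * (w t : ℂ)) :=
    int_w.ofReal.bdd_mul hcont_φ.aestronglyMeasurable hbdd
  have intc_h'w : Integrable (fun t => φ t * ((h' t * w t : ℝ) : ℂ)) :=
    int_h'w.ofReal.bdd_mul hcont_φ.aestronglyMeasurable hbdd
  have intc_h''w : Integrable (fun t => φ t * ((h'' t * w t : ℝ) : ℂ)) :=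
    int_h''w.ofReal.bdd_mul hcont_φ.aestronglyMeasurable hbdd
  have intc_h'2w : Integrable (fun t => φ t * (((h' t)^2 * w t : ℝ) : ℂ)) :=
    int_h'2w.ofReal.bdd_mul hcont_φ.aestronglyMeasurable hbdd
  -- limits
  have htend0 : Tendsto (fun t : ℝ => C₀ * Real.exp (-c*t^2)) (cocompact ℝ) (nhds 0) := by
    have := tendsto_rpow_abs_mul_exp_neg_mul_sq_cocompact hc 0
    simp only [Real.rpow_zero, one_mul] at this
    simpa using this.const_mul C₀
  have htend1 : Tendsto (fun t : ℝ => a * C₀ * Real.exp (-c*t^2)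
      + B * C₀ * (|t| * Real.exp (-c*t^2))) (cocompact ℝ) (nhds 0) := by
    have h0 := tendsto_rpow_abs_mul_exp_neg_mul_sq_cocompact hc 0
    simp only [Real.rpow_zero, one_mul] at h0
    have h1 := tendsto_rpow_abs_mul_exp_neg_mul_sq_cocompact hc 1
    simp only [Real.rpow_one] at h1
    simpa using (h0.const_mul (a * C₀)).add (h1.const_mul (B * C₀))
  have hwtend : Tendsto w (cocompact ℝ) (nhds 0) := by
    apply squeeze_zero_norm (fun t => ?_) htend0
    rw [Real.norm_eq_abs, abs_of_pos (hwpos t)]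
    exact hwle t
  have lw : Tendsto (fun t => φ t * (w t : ℂ)) (cocompact ℝ) (nhds 0) := by
    apply squeeze_zero_norm (fun t => ?_) htend0
    rw [norm_mul, hφ1, one_mul, Complex.norm_real, Real.norm_eq_abs,
      abs_of_pos (hwpos t)]
    exact hwle t
  have lh'w : Tendsto (fun t => h' t * w t) (cocompact ℝ) (nhds 0) := by
    apply squeeze_zero_norm (fun t => ?_) htend1
    rw [Real.norm_eq_abs]
    exact hb1 t
  have lch'w : Tendsto (fun t => φ t * ((h' t * w t : ℝ) : ℂ)) (cocompact ℝ) (nhds 0) := by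
    apply squeeze_zero_norm (fun t => ?_) htend1
    rw [norm_mul, hφ1, one_mul, Complex.norm_real, Real.norm_eq_abs]
    exact hb1 t
  -- derivatives
  have hφd : ∀ t, HasDerivAt φ (φ t * -(Complex.I * k)) t := by
    intro t
    have h1 : HasDerivAt (fun t : ℝ => -(Complex.I * k * t)) (-(Complex.I * k)) t := by
      have h0 := ((Complex.ofRealCLM.hasDerivAt (x := t)).const_mul (Complex.I * k)).neg
      simp at h0
      exact h0
    simpa using h1.cexp
  have hwd : ∀ t, HasDerivAt w (w t * -(h' t)) t := fun t => by
    simpa using (hd1 t).neg.exp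
  have h'wd : ∀ t, HasDerivAt (fun t => h' t * w t)
      (h'' t * w t + h' t * (w t * -(h' t))) t := fun t => (hd2 t).mul (hwd t)
  -- FTC identities
  set A := ∫ t, φ t * (w t : ℂ) with hA
  set A1 := ∫ t, φ t * ((h' t * w t : ℝ) : ℂ) with hA1
  set A2 := ∫ t, φ t * ((h'' t * w t : ℝ) : ℂ) with hA2
  set A3 := ∫ t, φ t * (((h' t)^2 * w t : ℝ) : ℂ) with hA3
  have e1 : ∀ t, φ t * -(Complex.I*k) * ((w t : ℝ) : ℂ) + φ t * ((w t * -(h' t) : ℝ) : ℂ)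
      = (-(Complex.I*k)) * (φ t * (w t : ℂ)) - φ t * ((h' t * w t : ℝ) : ℂ) := by
    intro t; push_cast; ring
  have I1 : -(Complex.I*k) * A - A1 = 0 := by
    have := integral_deriv_zero (fun t => φ t * (w t : ℂ))
      (fun t => φ t * -(Complex.I*k) * ((w t : ℝ) : ℂ) + φ t * ((w t * -(h' t) : ℝ) : ℂ))
      (fun t => (hφd t).mul ((hwd t).ofReal_comp))
      ((((intc_w.const_mul _).sub intc_h'w)).congr (ae_of_all _ fun t => (e1 t).symm))
      (lw.mono_left _root_.atTop_le_cocompact) (lw.mono_left _root_.atBot_le_cocompact)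
    simp only [e1] at this
    rwa [integral_sub (intc_w.const_mul _) intc_h'w, integral_const_mul] at this
  have e2 : ∀ t, φ t * -(Complex.I*k) * ((h' t * w t : ℝ) : ℂ)
        + φ t * ((h'' t * w t + h' t * (w t * -(h' t)) : ℝ) : ℂ)
      = (-(Complex.I*k)) * (φ t * ((h' t * w t : ℝ) : ℂ))
        + (φ t * ((h'' t * w t : ℝ) : ℂ) - φ t * (((h' t)^2 * w t : ℝ) : ℂ)) := by
    intro t; push_cast; ring
  have intc_sub : Integrable (fun t => φ t * ((h'' t * w t : ℝ) : ℂ)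
      - φ t * (((h' t)^2 * w t : ℝ) : ℂ)) := intc_h''w.sub intc_h'2w
  have I2 : -(Complex.I*k) * A1 + (A2 - A3) = 0 := by
    have := integral_deriv_zero (fun t => φ t * ((h' t * w t : ℝ) : ℂ))
      (fun t => φ t * -(Complex.I*k) * ((h' t * w t : ℝ) : ℂ)
        + φ t * ((h'' t * w t + h' t * (w t * -(h' t)) : ℝ) : ℂ))
      (fun t => (hφd t).mul ((h'wd t).ofReal_comp))
      (((intc_h'w.const_mul _).add intc_sub).congr
        (ae_of_all _ fun t => (e2 t).symm))
      (lch'w.mono_left _root_.atTop_le_cocompact) (lch'w.mono_left _root_.atBot_le_cocompact)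
    simp only [e2] at this
    rwa [integral_add (intc_h'w.const_mul _) intc_sub,
      integral_sub intc_h''w intc_h'2w, integral_const_mul] at this
  have e3 : ∀ t, h'' t * w t + h' t * (w t * -(h' t))
      = h'' t * w t - (h' t)^2 * w t := by intro t; ring
  have I3 : (∫ t, h'' t * w t) - ∫ t, (h' t)^2 * w t = 0 := by
    have := integral_deriv_zero (fun t => h' t * w t)
      (fun t => h'' t * w t + h' t * (w t * -(h' t)))
      h'wd
      ((int_h''w.sub int_h'2w).congr (ae_of_all _ fun t => (e3 t).symm))
      (lh'w.mono_left _root_.atTop_le_cocompact) (lh'w.mono_left _root_.atBot_le_cocompact)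
    simp only [e3] at this
    rwa [integral_sub int_h''w int_h'2w] at this
  -- combine
  have hA1eq : A1 = -(Complex.I*k) * A := by linear_combination -I1
  have hkey : (k^2 : ℂ) * A = A2 - A3 := by
    have hI2 := I2
    rw [hA1eq] at hI2
    have hIsq : (Complex.I : ℂ)^2 = -1 := Complex.I_sq
    linear_combination -hI2 + ((k:ℂ)^2 * A) * hIsq
  -- norm estimate
  have hq : A2 - A3 = ∫ t, φ t * (((h'' t - (h' t)^2) * w t : ℝ) : ℂ) := by
    rw [hA2, hA3, ← integral_sub intc_h''w intc_h'2w]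
    congr 1
    funext t
    push_cast
    ring
  have int_qw : Integrable (fun t => (h'' t - (h' t)^2) * w t) :=
    (int_h''w.sub int_h'2w).congr (ae_of_all _ fun t => by
      simp only [Pi.sub_apply]; ring)
  have int_bw : Integrable (fun t => (B + (h' t)^2) * w t) :=
    ((int_w.const_mul B).add int_h'2w).congr (ae_of_all _ fun t => by
      simp only [Pi.add_apply]; ring)
  have hZnn : 0 ≤ ∫ t, w t := integral_nonneg fun t => (hwpos t).le
  have hR32 : (∫ t, (h' t)^2 * w t) = ∫ t, h'' t * w t := by linarith [I3]
  have hR2le : (∫ t, h'' t * w t) ≤ B * ∫ t, w t := by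
    rw [← integral_const_mul]
    apply integral_mono int_h''w (int_w.const_mul B)
    intro t
    exact mul_le_mul_of_nonneg_right (le_of_abs_le (hupp t)) (hwpos t).le
  have hnorm : ‖A2 - A3‖ ≤ 2 * B * ∫ t, w t := by
    rw [hq]
    calc ‖∫ t, φ t * (((h'' t - (h' t)^2) * w t : ℝ) : ℂ)‖
        ≤ ∫ t, ‖φ t * (((h'' t - (h' t)^2) * w t : ℝ) : ℂ)‖ :=
          norm_integral_le_integral_norm _
      _ = ∫ t, |h'' t - (h' t)^2| * w t := by
          congr 1
          funext t
          rw [norm_mul, hφ1, one_mul, Complex.norm_real, Real.norm_eq_abs,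
            abs_mul, abs_of_pos (hwpos t)]
      _ ≤ ∫ t, (B + (h' t)^2) * w t := by
          apply integral_mono (int_qw.abs.congr (ae_of_all _ fun t => by
            simp [abs_mul, abs_of_pos (hwpos t)])) int_bw
          intro t
          apply mul_le_mul_of_nonneg_right _ (hwpos t).le
          have hb := abs_le.mp (hupp t)
          rcases abs_cases (h'' t - (h' t)^2) with ⟨he, _⟩ | ⟨he, _⟩ <;> rw [he] <;>
            nlinarith [sq_nonneg (h' t)]
      _ = B * (∫ t, w t) + ∫ t, (h' t)^2 * w t := by
          rw [← integral_const_mul, ← integral_add (int_w.const_mul B) int_h'2w]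
          congr 1
          funext t
          ring
      _ ≤ 2 * B * ∫ t, w t := by
          rw [hR32]
          linarith [hR2le]
  have hk2 : (0:ℝ) < k^2 := by positivity
  have hAnorm : k^2 * ‖A‖ ≤ 2 * B * ∫ t, w t := by
    have hn : ‖(k^2 : ℂ) * A‖ = k^2 * ‖A‖ := by
      rw [norm_mul]
      congr 1
      push_cast
      rw [norm_pow, Complex.norm_real, Real.norm_eq_abs, sq_abs]
    calc k^2 * ‖A‖ = ‖(k^2 : ℂ) * A‖ := hn.symm
      _ = ‖A2 - A3‖ := by rw [hkey]
      _ ≤ 2 * B * ∫ t, w t := hnorm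
  rw [div_mul_eq_mul_div, le_div_iff₀ hk2]
  nlinarith [hAnorm]
end Key1D

/-- Decay estimate (c13): for `F_k(θ) = e^{ik(θ(y)-θ(x))}` with `k ≠ 0`, `H` uniformly
convex with `|∂²H/∂θ(x)²| ≤ B`, one has `|⟨F_k⟩_H| ≤ 2B/k²`. -/
theorem stmt12 {ι : Type*} [Fintype ι] [DecidableEq ι] (x y : ι) (hxy : x ≠ y)
    (k : ℝ) (hk : k ≠ 0) (H : (ι → ℝ) → ℝ) (hH : ContDiff ℝ 2 H)
    (δ : ℝ) (hδ : 0 < δ)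
    (hconv : ∀ a v : ι → ℝ, δ * ∑ i, (v i) ^ 2 ≤ fderiv ℝ (fderiv ℝ H) a v v)
    (B : ℝ) (hB : 0 ≤ B)
    (hB2 : ∀ a : ι → ℝ,
      |fderiv ℝ (fun b => fderiv ℝ H b (Pi.single x 1)) a (Pi.single x 1)| ≤ B)
    (hint : Integrable (fun θ => exp (-H θ)) (volume : Measure (ι → ℝ))) :
    ‖(∫ θ : ι → ℝ, Complex.exp (Complex.I * k * ((θ y : ℂ) - (θ x : ℂ))) * exp (-H θ)) /
        ((∫ θ : ι → ℝ, exp (-H θ) : ℝ) : ℂ)‖ ≤ 2 * B / k ^ 2 := by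
  classical
  set v : ι → ℝ := Pi.single x 1 with hv
  have uinst : Unique {i : ι // i = x} := ⟨⟨⟨x, rfl⟩⟩, fun j => Subtype.ext j.2⟩
  set e := (MeasurableEquiv.piEquivPiSubtypeProd (fun _ : ι => ℝ) (fun i => i = x)).trans
    (MeasurableEquiv.prodCongr (@MeasurableEquiv.funUnique {i : ι // i = x} ℝ uinst _)
      (MeasurableEquiv.refl ({i : ι // ¬ i = x} → ℝ))) with he
  have mp : MeasurePreserving e volume volume := by
    have h1 := volume_preserving_piEquivPiSubtypeProd (fun _ : ι => ℝ) (fun i => i = x)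
    have h2 : MeasurePreserving
        (MeasurableEquiv.prodCongr (@MeasurableEquiv.funUnique {i : ι // i = x} ℝ uinst _)
          (MeasurableEquiv.refl ({i : ι // ¬ i = x} → ℝ))) volume volume := by
      have hp := (@volume_preserving_funUnique {i : ι // i = x} ℝ uinst _).prod
        (MeasurePreserving.id (volume : Measure ({i : ι // ¬ i = x} → ℝ)))
      have hfin : (@Unique.fintype {i : ι // i = x} uinst) = Fintype.subtypeEq x :=
        Subsingleton.elim _ _
      rw [hfin] at hp
      rw [← Measure.volume_eq_prod, ← Measure.volume_eq_prod] at hp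
      exact hp
    have hfin2 : (Subtype.fintype (fun i : ι => i = x)) = Fintype.subtypeEq x :=
      Subsingleton.elim _ _
    rw [hfin2] at h1
    exact h2.comp h1
  have mpsymm : MeasurePreserving e.symm volume volume := mp.symm e
  have hsymm : ∀ (t : ℝ) (r : {i : ι // ¬ i = x} → ℝ) (i : ι),
      e.symm (t, r) i = if h : i = x then t else r ⟨i, h⟩ := by
    intro t r i
    rfl
  have hline : ∀ (t : ℝ) (r : {i : ι // ¬ i = x} → ℝ),
      e.symm (t, r) = e.symm (0, r) + t • v := by
    intro t r
    funext i
    rcases eq_or_ne i x with rfl | hi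
    · simp [hsymm, hv]
    · simp [hsymm, hi, hv, Pi.single_eq_of_ne hi]
  -- global smoothness facts
  have hHd : Differentiable ℝ H := hH.differentiable (by norm_num)
  have hG2 : ContDiff ℝ 1 (fderiv ℝ H) := hH.fderiv_right (by norm_num)
  have hGdiff : Differentiable ℝ (fderiv ℝ H) := hG2.differentiable one_ne_zero
  have hD2cont : Continuous (fderiv ℝ (fderiv ℝ H)) := hG2.continuous_fderiv one_ne_zero
  have hsum : ∑ i, (v i)^2 = (1:ℝ) := by
    rw [hv]
    rw [Finset.sum_eq_single x]
    · simp
    · intro i _ hi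
      simp [Pi.single_eq_of_ne hi]
    · intro hx'
      exact absurd (Finset.mem_univ x) hx'
  have heqB : ∀ a, |fderiv ℝ (fderiv ℝ H) a v v| ≤ B := by
    intro a
    have hfd : fderiv ℝ (fun b => fderiv ℝ H b v) a
        = ((fderiv ℝ (fderiv ℝ H) a).flip v) := by
      rw [fderiv_clm_apply (hGdiff a) (differentiableAt_const v)]
      simp
    have := hB2 a
    rw [hfd] at this
    simpa using this
  -- the numerator function
  set F : (ι → ℝ) → ℂ := fun θ => Complex.exp (Complex.I * k * ((θ y : ℂ) - (θ x : ℂ)))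
    with hF
  have hFcont : Continuous F := by
    apply Complex.continuous_exp.comp
    exact continuous_const.mul
      ((Complex.continuous_ofReal.comp (continuous_apply y)).sub
        (Complex.continuous_ofReal.comp (continuous_apply x)))
  have hFnorm : ∀ θ, ‖F θ‖ = 1 := by
    intro θ
    rw [hF]
    simp [Complex.norm_exp]
  have hFint : Integrable (fun θ => F θ * (exp (-H θ) : ℂ)) :=
    hint.ofReal.bdd_mul hFcont.aestronglyMeasurable (ae_of_all _ fun θ => (hFnorm θ).le)
  set Z := ∫ θ : ι → ℝ, exp (-H θ) with hZdef
  have hZpos : 0 < Z := by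
    rw [hZdef, MeasureTheory.integral_pos_iff_support_of_nonneg
      (fun θ => (Real.exp_pos _).le) hint]
    have hsupp : Function.support (fun θ : ι → ℝ => exp (-H θ)) = Set.univ :=
      Set.eq_univ_of_forall fun θ => (Real.exp_pos _).ne'
    rw [hsupp]
    exact isOpen_univ.measure_pos _ Set.univ_nonempty
  -- transfer to the product space
  have hgInt : Integrable
      (fun z : ℝ × ({i : ι // ¬ i = x} → ℝ) => F (e.symm z) * (exp (-H (e.symm z)) : ℂ))
      (volume.prod volume) := by
    rw [← Measure.volume_eq_prod]
    exact (mpsymm.integrable_comp_emb e.symm.measurableEmbedding).mpr hFint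
  have hwInt2 : Integrable
      (fun z : ℝ × ({i : ι // ¬ i = x} → ℝ) => exp (-H (e.symm z)))
      (volume.prod volume) := by
    rw [← Measure.volume_eq_prod]
    exact (mpsymm.integrable_comp_emb e.symm.measurableEmbedding).mpr hint
  have hNeq : (∫ θ : ι → ℝ, F θ * (exp (-H θ) : ℂ))
      = ∫ r : {i : ι // ¬ i = x} → ℝ, ∫ t : ℝ,
          F (e.symm (t, r)) * (exp (-H (e.symm (t, r))) : ℂ) := by
    rw [← mpsymm.integral_comp e.symm.measurableEmbedding, Measure.volume_eq_prod]
    exact integral_prod_symm _ hgInt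
  have hZeq : Z = ∫ r : {i : ι // ¬ i = x} → ℝ, ∫ t : ℝ, exp (-H (e.symm (t, r))) := by
    rw [hZdef, ← mpsymm.integral_comp e.symm.measurableEmbedding, Measure.volume_eq_prod]
    exact integral_prod_symm _ hwInt2
  -- slice estimate
  have slice : ∀ r : {i : ι // ¬ i = x} → ℝ,
      ‖∫ t : ℝ, F (e.symm (t, r)) * (exp (-H (e.symm (t, r))) : ℂ)‖
        ≤ 2 * B / k ^ 2 * ∫ t : ℝ, exp (-H (e.symm (t, r))) := by
    intro r
    have hLx : ∀ t : ℝ, e.symm (t, r) x = t := by intro t; rw [hsymm]; simp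
    have hLy : ∀ t : ℝ, e.symm (t, r) y = e.symm (0, r) y := by
      intro t
      rw [hsymm, hsymm]
      simp [Ne.symm hxy]
    have hLd : ∀ t : ℝ, HasDerivAt (fun s : ℝ => e.symm (0, r) + s • v) v t := by
      intro t
      simpa using ((hasDerivAt_id t).smul_const v).const_add (e.symm (0, r))
    have hd1 : ∀ t : ℝ, HasDerivAt (fun s : ℝ => H (e.symm (0, r) + s • v))
        (fderiv ℝ H (e.symm (0, r) + t • v) v) t := by
      intro t
      exact (hHd (e.symm (0, r) + t • v)).hasFDerivAt.comp_hasDerivAt t (hLd t)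
    have hd2 : ∀ t : ℝ, HasDerivAt (fun s : ℝ => fderiv ℝ H (e.symm (0, r) + s • v) v)
        (fderiv ℝ (fderiv ℝ H) (e.symm (0, r) + t • v) v v) t := by
      intro t
      have hfd : HasDerivAt (fun s : ℝ => fderiv ℝ H (e.symm (0, r) + s • v))
          ((fderiv ℝ (fderiv ℝ H) (e.symm (0, r) + t • v)) v) t := by
        exact (hGdiff (e.symm (0, r) + t • v)).hasFDerivAt.comp_hasDerivAt t (hLd t)
      simpa using hfd.clm_apply (hasDerivAt_const t v)
    have hc2 : Continuous (fun t : ℝ => fderiv ℝ (fderiv ℝ H) (e.symm (0, r) + t • v) v v) := by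
      have hLc : Continuous (fun s : ℝ => e.symm (0, r) + s • v) := by
        exact continuous_const.add (continuous_id.smul continuous_const)
      exact ((hD2cont.comp hLc).clm_apply continuous_const).clm_apply continuous_const
    have hlow : ∀ t : ℝ, δ ≤ fderiv ℝ (fderiv ℝ H) (e.symm (0, r) + t • v) v v := by
      intro t
      have := hconv (e.symm (0, r) + t • v) v
      rwa [hsum, mul_one] at this
    have hupp : ∀ t : ℝ, |fderiv ℝ (fderiv ℝ H) (e.symm (0, r) + t • v) v v| ≤ B :=
      fun t => heqB _
    have key := key1D hk hδ hB hd1 hd2 hc2 hlow hupp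
    have hrw : ∀ t : ℝ, F (e.symm (t, r)) * (exp (-H (e.symm (t, r))) : ℂ)
        = Complex.exp (Complex.I * k * ((e.symm (0, r) y : ℝ) : ℂ))
          * (Complex.exp (-(Complex.I * k * t))
            * (exp (-H (e.symm (0, r) + t • v)) : ℂ)) := by
      intro t
      simp only [hF]
      rw [show (e.symm (t, r)) y = (e.symm (0, r)) y from hLy t]
      rw [show (e.symm (t, r)) x = t from hLx t]
      rw [show e.symm (t, r) = e.symm (0, r) + t • v from hline t r]
      rw [← mul_assoc, ← Complex.exp_add]
      congr 2
      push_cast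
      ring
    have hrw2 : ∀ t : ℝ, exp (-H (e.symm (t, r))) = exp (-H (e.symm (0, r) + t • v)) := by
      intro t
      rw [show e.symm (t, r) = e.symm (0, r) + t • v from hline t r]
    calc ‖∫ t : ℝ, F (e.symm (t, r)) * (exp (-H (e.symm (t, r))) : ℂ)‖
        = ‖Complex.exp (Complex.I * k * ((e.symm (0, r) y : ℝ) : ℂ))
            * ∫ t : ℝ, Complex.exp (-(Complex.I * k * t))
              * (exp (-H (e.symm (0, r) + t • v)) : ℂ)‖ := by
          rw [← integral_const_mul]
          congr 1
          exact integral_congr_ae (ae_of_all _ fun t => hrw t)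
      _ = ‖∫ t : ℝ, Complex.exp (-(Complex.I * k * t))
            * (exp (-H (e.symm (0, r) + t • v)) : ℂ)‖ := by
          rw [norm_mul]
          have : ‖Complex.exp (Complex.I * k * ((e.symm (0, r) y : ℝ) : ℂ))‖ = 1 := by
            simp [Complex.norm_exp]
          rw [this, one_mul]
      _ ≤ 2 * B / k ^ 2 * ∫ t : ℝ, exp (-(H (e.symm (0, r) + t • v))) := key
      _ = 2 * B / k ^ 2 * ∫ t : ℝ, exp (-H (e.symm (t, r))) := by
          congr 1
          exact integral_congr_ae (ae_of_all _ fun t => (hrw2 t).symm)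
  -- assemble
  have main : ‖∫ θ : ι → ℝ, F θ * (exp (-H θ) : ℂ)‖ ≤ 2 * B / k ^ 2 * Z := by
    rw [hNeq, hZeq]
    calc ‖∫ r : {i : ι // ¬ i = x} → ℝ, ∫ t : ℝ,
          F (e.symm (t, r)) * (exp (-H (e.symm (t, r))) : ℂ)‖
        ≤ ∫ r : {i : ι // ¬ i = x} → ℝ, ‖∫ t : ℝ,
            F (e.symm (t, r)) * (exp (-H (e.symm (t, r))) : ℂ)‖ :=
          norm_integral_le_integral_norm _
      _ ≤ ∫ r : {i : ι // ¬ i = x} → ℝ,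
            2 * B / k ^ 2 * ∫ t : ℝ, exp (-H (e.symm (t, r))) := by
          apply integral_mono hgInt.integral_prod_right.norm
            (hwInt2.integral_prod_right.const_mul _)
          intro r
          exact slice r
      _ = 2 * B / k ^ 2 * ∫ r : {i : ι // ¬ i = x} → ℝ, ∫ t : ℝ,
            exp (-H (e.symm (t, r))) := integral_const_mul _ _
  rw [norm_div]
  have hZnorm : ‖((Z : ℝ) : ℂ)‖ = Z := by
    rw [Complex.norm_real, Real.norm_eq_abs, abs_of_pos hZpos]
  rw [hZnorm, div_le_iff₀ hZpos]
  calc ‖∫ θ : ι → ℝ, F θ * (exp (-H θ) : ℂ)‖ ≤ 2 * B / k ^ 2 * Z := main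
    _ = 2 * B / k ^ 2 * Z := rfl
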